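/- Let G be an étale groupoid, x ∈ G⁰, and H ≤ G_x^x a subgroup. Then the formula L(a)(δ_{gH}) = Σ_{k ∈ G_{r(g)}} a(k) δ_{kgH}, for a in the convolution algebra C_c(G) and g ∈ G_x, defines a *-representation L of C_c(G) on ℓ²(G_x/H); in particular, for all a, b ∈ C_c(G): L(a*) = L(a)* and L(ab) = L(a)L(b). -/

import Mathlib

open MeasureTheory
open scoped ENNReal


open scoped ENNReal NNReal ComplexConjugate



/-- An étale groupoid: a topological groupoid (possibly non-Hausdorff) on the type `G`,
with partially defined multiplication `mul g h` (meaningful when `src g = rng h`),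
inversion `inv`, source and range maps `src`, `rng`, and open unit space `unitSpace`
which is locally compact and Hausdorff; the source and range maps are local
homeomorphisms. -/
structure EtaleGroupoid (G : Type*) [TopologicalSpace G] : Type _ where
  src : G → G
  rng : G → G
  mul : G → G → G
  inv : G → G
  unitSpace : Set G
  src_mem : ∀ g, src g ∈ unitSpace
  rng_mem : ∀ g, rng g ∈ unitSpace
  src_unit : ∀ u ∈ unitSpace, src u = u
  rng_unit : ∀ u ∈ unitSpace, rng u = u
  src_mul : ∀ g h, src g = rng h → src (mul g h) = src h
  rng_mul : ∀ g h, src g = rng h → rng (mul g h) = rng g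
  mul_assoc : ∀ g h k, src g = rng h → src h = rng k →
    mul (mul g h) k = mul g (mul h k)
  src_inv : ∀ g, src (inv g) = rng g
  rng_inv : ∀ g, rng (inv g) = src g
  inv_mul_self : ∀ g, mul (inv g) g = src g
  mul_inv_self : ∀ g, mul g (inv g) = rng g
  mul_src_self : ∀ g, mul g (src g) = g
  rng_mul_self : ∀ g, mul (rng g) g = g
  isOpen_unitSpace : IsOpen unitSpace
  t2_unitSpace : ∀ x ∈ unitSpace, ∀ y ∈ unitSpace, x ≠ y →
    ∃ U V : Set G, IsOpen U ∧ IsOpen V ∧ x ∈ U ∧ y ∈ V ∧ U ∩ V = ∅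
  locallyCompact_unitSpace : ∀ x ∈ unitSpace, ∀ U : Set G, IsOpen U → x ∈ U →
    ∃ K V : Set G, IsCompact K ∧ IsOpen V ∧ x ∈ V ∧ V ⊆ K ∧ K ⊆ U ∩ unitSpace
  continuous_inv : Continuous inv
  continuousOn_mul : ContinuousOn (fun p : G × G => mul p.1 p.2)
    {p : G × G | src p.1 = rng p.2}
  etale_src : ∀ g : G, ∃ U : Set G, IsOpen U ∧ g ∈ U ∧ Set.InjOn src U ∧
    ContinuousOn src U ∧ ∀ V ⊆ U, IsOpen V → IsOpen (src '' V)
  etale_rng : ∀ g : G, ∃ U : Set G, IsOpen U ∧ g ∈ U ∧ Set.InjOn rng U ∧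
    ContinuousOn rng U ∧ ∀ V ⊆ U, IsOpen V → IsOpen (rng '' V)

namespace EtaleGroupoid

variable {G : Type*} [TopologicalSpace G] (E : EtaleGroupoid G)

/-- The isotropy of `G`: arrows with equal source and range. -/
def iso : Set G := {g : G | E.src g = E.rng g}

/-- An (open) bisection: an open set on which both the source and range maps are
injective (hence homeomorphisms onto their images). -/
def IsBisection (U : Set G) : Prop :=
  IsOpen U ∧ Set.InjOn E.src U ∧ Set.InjOn E.rng U

/-- The semifinite part of a measure:
`μ_sf(A) = sup { μ(B) : B ⊆ A Borel, μ(B) < ∞ }`. -/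
noncomputable def sfPart [MeasurableSpace G] (μ : Measure G) (A : Set G) : ℝ≥0∞ :=
  ⨆ (B : Set G) (_ : MeasurableSet B) (_ : B ⊆ A) (_ : μ B ≠ ⊤), μ B

/-- A Radon measure on the unit space `G⁰`: a Borel measure on `G` concentrated on
`G⁰` which is finite on compact subsets of `G⁰`, inner regular on open subsets of `G⁰`
and outer regular on Borel subsets of `G⁰`. -/
def IsRadonOnUnits [MeasurableSpace G] (μ : Measure G) : Prop :=
  μ E.unitSpaceᶜ = 0 ∧
  (∀ K : Set G, K ⊆ E.unitSpace → IsCompact K → μ K ≠ ⊤) ∧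
  (∀ U : Set G, IsOpen U → U ⊆ E.unitSpace →
    μ U = ⨆ (K : Set G) (_ : IsCompact K) (_ : K ⊆ U), μ K) ∧
  (∀ A : Set G, MeasurableSet A → A ⊆ E.unitSpace →
    μ A = ⨅ (U : Set G) (_ : IsOpen U) (_ : A ⊆ U ∧ U ⊆ E.unitSpace), μ U)

/-- `G` is essentially free with respect to `μ`:
`μ_sf(s(U ∩ Iso(G) \ G⁰)) = 0` for every open bisection `U`. -/
def EssentiallyFree [MeasurableSpace G] (μ : Measure G) : Prop :=
  ∀ U : Set G, E.IsBisection U →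
    sfPart μ (E.src '' ((U ∩ E.iso) \ E.unitSpace)) = 0

end EtaleGroupoid

namespace EtaleGroupoid

variable (G : Type*) [TopologicalSpace G]

/-- The generating set of the convolution algebra `𝒞_c(G)`: functions which are
continuous on some open Hausdorff subset `U ⊆ G`, vanish outside a compact subset of
`U`, and vanish outside `U`. -/
def CcGen : Set (G → ℂ) :=
  {f : G → ℂ | ∃ U : Set G, IsOpen U ∧
    (∀ x ∈ U, ∀ y ∈ U, x ≠ y →
      ∃ V W : Set G, IsOpen V ∧ IsOpen W ∧ x ∈ V ∧ y ∈ W ∧ V ∩ W = ∅) ∧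
    ContinuousOn f U ∧
    ∃ K : Set G, K ⊆ U ∧ IsCompact K ∧ ∀ g ∉ K, f g = 0}

/-- The convolution algebra `𝒞_c(G)`: the linear span of the compactly supported
functions which are continuous on an open Hausdorff subset. -/
noncomputable def Cc : Submodule ℂ (G → ℂ) :=
  Submodule.span ℂ (CcGen G)

variable {G} (E : EtaleGroupoid G)

/-- The convolution product `(a * b)(g) = ∑_{g₁ g₂ = g} a(g₁) b(g₂)`. -/
noncomputable def convolution (a b : G → ℂ) : G → ℂ :=
  fun g => ∑' p : {p : G × G // E.src p.1 = E.rng p.2 ∧ E.mul p.1 p.2 = g},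
    a p.1.1 * b p.1.2

/-- The involution `a*(g) = conj (a (g⁻¹))`. -/
def starFun (a : G → ℂ) : G → ℂ :=
  fun g => star (a (E.inv g))

end EtaleGroupoid

namespace EtaleGroupoid

variable {G : Type*} [TopologicalSpace G] (E : EtaleGroupoid G)

/-- The source fibre `G_x = s⁻¹(x)`. -/
def srcFiber (x : G) : Type _ := {g : G // E.src g = x}

/-- The right-coset relation on `G_x` determined by a subgroup `H ≤ G_x^x`:
`g ∼ g'` iff `g h = g'` for some `h ∈ H`. -/
def cosetRel (x : G) (H : Set G) (g g' : E.srcFiber x) : Prop :=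
  ∃ h ∈ H, E.mul g.1 h = g'.1

/-- The coset space `G_x / H`. -/
def CosetSpace (x : G) (H : Set G) : Type _ := Quot (E.cosetRel x H)

noncomputable instance (x : G) (H : Set G) : DecidableEq (E.CosetSpace x H) :=
  Classical.decEq _

/-- The Hilbert space `ℓ²(G_x/H)`. -/
noncomputable abbrev L2 (x : G) (H : Set G) := lp (fun _ : E.CosetSpace x H => ℂ) 2

/-- The basis vector `δ_{gH} ∈ ℓ²(G_x/H)`. -/
noncomputable def delta (x : G) (H : Set G) (g : G) (hg : E.src g = x) :
    E.L2 x H :=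
  lp.single 2 (Quot.mk _ (⟨g, hg⟩ : E.srcFiber x)) (1 : ℂ)

end EtaleGroupoid

namespace SchurAux

variable {ι : Type*}

lemma two_mul_le_sq_add_sq (a b : ℝ≥0∞) : 2 * (a * b) ≤ a ^ 2 + b ^ 2 := by
  rcases le_total a b with h | h
  · obtain ⟨c, rfl⟩ := exists_add_of_le h
    have : 2 * (a * (a + c)) = a ^ 2 + (a ^ 2 + 2 * (a * c)) := by ring
    rw [this]
    gcongr
    have : (a + c) ^ 2 = a ^ 2 + 2 * (a * c) + c ^ 2 := by ring
    rw [this]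
    exact le_add_right le_rfl
  · obtain ⟨c, rfl⟩ := exists_add_of_le h
    have : 2 * ((b + c) * b) = b ^ 2 + (b ^ 2 + 2 * (b * c)) := by ring
    rw [this]
    rw [add_comm (b ^ 2)]
    gcongr
    have : (b + c) ^ 2 = b ^ 2 + 2 * (b * c) + c ^ 2 := by ring
    rw [this]
    exact le_add_right le_rfl

lemma ennreal_cs (f g : ι → ℝ≥0∞) :
    (∑' i, f i * g i) ^ 2 ≤ (∑' i, f i) * (∑' i, f i * g i ^ 2) := by
  have h2 : (2 : ℝ≥0∞) ≠ 0 := by norm_num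
  have h2' : (2 : ℝ≥0∞) ≠ ⊤ := by norm_num
  rw [← ENNReal.mul_le_mul_iff_right h2 h2']
  have lhs : ∑' i, ∑' j, 2 * ((f i * g i) * (f j * g j))
      = (2:ℝ≥0∞) * (∑' i, f i * g i) ^ 2 := by
    calc ∑' i, ∑' j, 2 * ((f i * g i) * (f j * g j))
        = ∑' i, (2 * (f i * g i)) * ∑' j, (f j * g j) := by
          refine tsum_congr fun i => ?_
          rw [← ENNReal.tsum_mul_left]
          exact tsum_congr fun j => by ring
      _ = (∑' i, 2 * (f i * g i)) * ∑' j, (f j * g j) := ENNReal.tsum_mul_right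
      _ = (2 * ∑' i, (f i * g i)) * ∑' j, (f j * g j) := by rw [ENNReal.tsum_mul_left]
      _ = (2:ℝ≥0∞) * (∑' i, f i * g i) ^ 2 := by ring
  rw [← lhs]
  have step : ∀ i j, 2 * ((f i * g i) * (f j * g j))
      ≤ f i * f j * (g i ^ 2) + f i * f j * (g j ^ 2) := by
    intro i j
    calc 2 * ((f i * g i) * (f j * g j)) = (f i * f j) * (2 * (g i * g j)) := by ring
    _ ≤ (f i * f j) * (g i ^ 2 + g j ^ 2) := by
        exact mul_le_mul_right (two_mul_le_sq_add_sq _ _) _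
    _ = f i * f j * g i ^ 2 + f i * f j * g j ^ 2 := by ring
  calc ∑' i, ∑' j, 2 * ((f i * g i) * (f j * g j))
      ≤ ∑' i, ∑' j, (f i * f j * g i ^ 2 + f i * f j * g j ^ 2) := by
        exact ENNReal.tsum_le_tsum fun i => ENNReal.tsum_le_tsum fun j => step i j
    _ = (∑' i, ∑' j, f i * f j * g i ^ 2) + ∑' i, ∑' j, f i * f j * g j ^ 2 := by
        rw [← ENNReal.tsum_add]
        exact tsum_congr fun i => ENNReal.tsum_add
    _ = 2 * ((∑' i, f i) * (∑' i, f i * g i ^ 2)) := by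
        have e1 : (∑' i, ∑' j, f i * f j * g i ^ 2)
            = (∑' i, f i * g i ^ 2) * (∑' j, f j) := by
          rw [← ENNReal.tsum_mul_right]
          refine tsum_congr fun i => ?_
          rw [← ENNReal.tsum_mul_left]
          exact tsum_congr fun j => by ring
        have e2 : (∑' i, ∑' j, f i * f j * g j ^ 2)
            = (∑' i, f i) * (∑' j, f j * g j ^ 2) := by
          rw [← ENNReal.tsum_mul_right]
          refine tsum_congr fun i => ?_
          rw [← ENNReal.tsum_mul_left]
          exact tsum_congr fun j => by ring
        rw [e1, e2]; ring

/-- absolute row sums control the pointwise products. -/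
lemma summable_row {M : ι → ι → ℂ} {ψ : ι → ℂ} {ξ : ι}
    (h : ∑' η, (‖M ξ η‖₊ * ‖ψ η‖₊ : ℝ≥0∞) ≠ ⊤) :
    Summable fun η => M ξ η * ψ η := by
  have h' : ∑' η, ((‖M ξ η‖₊ * ‖ψ η‖₊ : ℝ≥0) : ℝ≥0∞) ≠ ⊤ := by
    simpa [ENNReal.coe_mul] using h
  have hs : Summable fun η => (‖M ξ η‖₊ * ‖ψ η‖₊ : ℝ≥0) :=
    ENNReal.tsum_coe_ne_top_iff_summable.mp h'
  exact Summable.of_nnnorm (by simpa [nnnorm_mul] using hs)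

lemma nnnorm_tsum_le_ennreal {v : ι → ℂ}
    (h : ∑' i, (‖v i‖₊ : ℝ≥0∞) ≠ ⊤) :
    (‖∑' i, v i‖₊ : ℝ≥0∞) ≤ ∑' i, (‖v i‖₊ : ℝ≥0∞) := by
  have hs : Summable fun i => ‖v i‖₊ := ENNReal.tsum_coe_ne_top_iff_summable.mp h
  calc (‖∑' i, v i‖₊ : ℝ≥0∞) ≤ ((∑' i, ‖v i‖₊ : ℝ≥0) : ℝ≥0∞) := by
        exact_mod_cast ENNReal.coe_le_coe.mpr (nnnorm_tsum_le hs)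
    _ = ∑' i, (‖v i‖₊ : ℝ≥0∞) := (ENNReal.coe_tsum hs)



section Op

noncomputable abbrev l2 (ι : Type*) := lp (fun _ : ι => ℂ) 2

lemma two_toReal : ((2:ℝ≥0∞)).toReal = 2 := by norm_num

lemma bridge_toReal (v : ι → ℂ) :
    (∑' i, (‖v i‖₊:ℝ≥0∞)^2).toReal = ∑' i, ‖v i‖^2 := by
  rw [ENNReal.tsum_toReal_eq (fun i => by simp)]
  refine tsum_congr fun i => ?_
  simp [ENNReal.toReal_pow]

lemma bridge_summable {v : ι → ℂ} (h : ∑' i, (‖v i‖₊:ℝ≥0∞)^2 ≠ ⊤) :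
    Summable fun i => ‖v i‖^2 := by
  have h' : ∑' i, ((‖v i‖₊^2 : ℝ≥0) : ℝ≥0∞) ≠ ⊤ := by
    simpa [ENNReal.coe_pow] using h
  have := ENNReal.tsum_coe_ne_top_iff_summable.mp h'
  have := NNReal.summable_coe.mpr this
  simpa [NNReal.coe_pow] using this

lemma lp_sq_sum_ne_top (ψ : l2 ι) : ∑' η, (‖(ψ : ∀ _ : ι, ℂ) η‖₊:ℝ≥0∞)^2 ≠ ⊤ := by
  have hsum : Summable fun η => ‖(ψ : ∀ _ : ι, ℂ) η‖ ^ ((2:ℝ≥0∞)).toReal :=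
    (lp.memℓp ψ).summable (by norm_num)
  have hsum2 : Summable fun η => (‖(ψ : ∀ _ : ι, ℂ) η‖₊^2 : ℝ≥0) := by
    rw [← NNReal.summable_coe]
    refine hsum.congr fun η => ?_
    rw [two_toReal]
    rw [Real.rpow_two]
    simp
  have := ENNReal.tsum_coe_ne_top_iff_summable.mpr hsum2
  simpa [ENNReal.coe_pow] using this

lemma lp_sq_sum_eq (ψ : l2 ι) :
    (∑' η, (‖(ψ : ∀ _ : ι, ℂ) η‖₊:ℝ≥0∞)^2).toReal = ‖ψ‖^2 := by
  rw [bridge_toReal]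
  have := lp.norm_rpow_eq_tsum (p := 2) (by norm_num) ψ
  rw [two_toReal] at this
  rw [← Real.rpow_two]
  rw [this]
  refine tsum_congr fun i => ?_
  rw [Real.rpow_two]

variable {M : ι → ι → ℂ} {C : ℝ≥0∞}

lemma rowprod_ne_top (hC : C ≠ ⊤) (hr : ∀ ξ, ∑' η, (‖M ξ η‖₊:ℝ≥0∞) ≤ C)
    (ψ : l2 ι) (ξ : ι) :
    ∑' η, (‖M ξ η‖₊ * ‖(ψ : ∀ _ : ι, ℂ) η‖₊ : ℝ≥0∞) ≠ ⊤ := by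
  have hb : ∀ η, (‖(ψ : ∀ _ : ι, ℂ) η‖₊ : ℝ≥0∞) ≤ (‖ψ‖₊ : ℝ≥0∞) := by
    intro η
    have := lp.norm_apply_le_norm (p := 2) (by norm_num) ψ η
    exact_mod_cast this
  have : ∑' η, (‖M ξ η‖₊ * ‖(ψ : ∀ _ : ι, ℂ) η‖₊ : ℝ≥0∞)
      ≤ ∑' η, (‖M ξ η‖₊ : ℝ≥0∞) * (‖ψ‖₊ : ℝ≥0∞) :=
    ENNReal.tsum_le_tsum fun η => mul_le_mul_right (hb η) _
  refine ne_top_of_le_ne_top ?_ this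
  rw [ENNReal.tsum_mul_right]
  exact ENNReal.mul_ne_top (ne_top_of_le_ne_top hC (hr ξ)) ENNReal.coe_ne_top

lemma summable_matVec (hC : C ≠ ⊤) (hr : ∀ ξ, ∑' η, (‖M ξ η‖₊:ℝ≥0∞) ≤ C)
    (ψ : l2 ι) (ξ : ι) : Summable fun η => M ξ η * (ψ : ∀ _ : ι, ℂ) η :=
  summable_row (rowprod_ne_top hC hr ψ ξ)

lemma main_bound (hC : C ≠ ⊤) (hr : ∀ ξ, ∑' η, (‖M ξ η‖₊:ℝ≥0∞) ≤ C)
    (hc : ∀ η, ∑' ξ, (‖M ξ η‖₊:ℝ≥0∞) ≤ C) (ψ : l2 ι) :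
    ∑' ξ, (‖∑' η, M ξ η * (ψ : ∀ _ : ι, ℂ) η‖₊ : ℝ≥0∞)^2
      ≤ C^2 * ∑' η, (‖(ψ : ∀ _ : ι, ℂ) η‖₊:ℝ≥0∞)^2 := by
  set b : ι → ℝ≥0∞ := fun η => (‖(ψ : ∀ _ : ι, ℂ) η‖₊ : ℝ≥0∞) with hb
  set a : ι → ι → ℝ≥0∞ := fun ξ η => (‖M ξ η‖₊ : ℝ≥0∞) with ha
  have step1 : ∀ ξ, (‖∑' η, M ξ η * (ψ : ∀ _ : ι, ℂ) η‖₊ : ℝ≥0∞)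
      ≤ ∑' η, a ξ η * b η := by
    intro ξ
    have hne : ∑' η, (‖M ξ η * (ψ : ∀ _ : ι, ℂ) η‖₊ : ℝ≥0∞) ≠ ⊤ := by
      have := rowprod_ne_top hC hr ψ ξ
      simpa [nnnorm_mul, ENNReal.coe_mul] using this
    refine le_trans (nnnorm_tsum_le_ennreal hne) (le_of_eq ?_)
    refine tsum_congr fun η => ?_
    simp [a, b, nnnorm_mul, ENNReal.coe_mul]
  calc ∑' ξ, (‖∑' η, M ξ η * (ψ : ∀ _ : ι, ℂ) η‖₊ : ℝ≥0∞)^2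
      ≤ ∑' ξ, (∑' η, a ξ η * b η)^2 :=
        ENNReal.tsum_le_tsum fun ξ => pow_le_pow_left' (step1 ξ) 2
    _ ≤ ∑' ξ, (∑' η, a ξ η) * (∑' η, a ξ η * b η ^ 2) :=
        ENNReal.tsum_le_tsum fun ξ => ennreal_cs _ _
    _ ≤ ∑' ξ, C * (∑' η, a ξ η * b η ^ 2) :=
        ENNReal.tsum_le_tsum fun ξ => mul_le_mul_left (hr ξ) _
    _ = C * ∑' ξ, ∑' η, a ξ η * b η ^ 2 := ENNReal.tsum_mul_left
    _ = C * ∑' η, (∑' ξ, a ξ η) * b η ^ 2 := by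
        rw [ENNReal.tsum_comm]
        congr 1
        exact tsum_congr fun η => ENNReal.tsum_mul_right
    _ ≤ C * ∑' η, C * b η ^ 2 := by
        refine mul_le_mul_right (ENNReal.tsum_le_tsum fun η => ?_) _
        exact mul_le_mul_left (hc η) _
    _ = C^2 * ∑' η, b η ^ 2 := by
        rw [ENNReal.tsum_mul_left, ← mul_assoc, sq]

lemma memℓp_matVec (hC : C ≠ ⊤) (hr : ∀ ξ, ∑' η, (‖M ξ η‖₊:ℝ≥0∞) ≤ C)
    (hc : ∀ η, ∑' ξ, (‖M ξ η‖₊:ℝ≥0∞) ≤ C) (ψ : l2 ι) :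
    Memℓp (fun ξ => ∑' η, M ξ η * (ψ : ∀ _ : ι, ℂ) η) (2 : ℝ≥0∞) := by
  apply memℓp_gen
  have h2 : ((2:ℝ≥0∞)).toReal = 2 := two_toReal
  have hne : ∑' ξ, (‖∑' η, M ξ η * (ψ : ∀ _ : ι, ℂ) η‖₊ : ℝ≥0∞)^2 ≠ ⊤ := by
    refine ne_top_of_le_ne_top ?_ (main_bound hC hr hc ψ)
    exact ENNReal.mul_ne_top (ENNReal.pow_ne_top hC) (lp_sq_sum_ne_top ψ)
  have := bridge_summable hne
  refine this.congr fun ξ => ?_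
  rw [h2, Real.rpow_two]

noncomputable def matOp (M : ι → ι → ℂ) (C : ℝ≥0∞) (hC : C ≠ ⊤)
    (hr : ∀ ξ, ∑' η, (‖M ξ η‖₊:ℝ≥0∞) ≤ C) (hc : ∀ η, ∑' ξ, (‖M ξ η‖₊:ℝ≥0∞) ≤ C) :
    l2 ι →L[ℂ] l2 ι :=
  LinearMap.mkContinuous
    { toFun := fun ψ => (⟨fun ξ => ∑' η, M ξ η * (ψ : ∀ _ : ι, ℂ) η,
        memℓp_matVec hC hr hc ψ⟩ : l2 ι)
      map_add' := by
        intro ψ φ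
        apply lp.ext
        funext ξ
        have h1 := summable_matVec hC hr ψ ξ
        have h2 := summable_matVec hC hr φ ξ
        simp only []
        have : (fun η => M ξ η * ((ψ + φ) : ∀ _ : ι, ℂ) η)
            = fun η => M ξ η * (ψ : ∀ _ : ι, ℂ) η + M ξ η * (φ : ∀ _ : ι, ℂ) η := by
          funext η
          simp [mul_add]
        calc (∑' η, M ξ η * ((ψ + φ) : ∀ _ : ι, ℂ) η)
            = ∑' η, (M ξ η * (ψ : ∀ _ : ι, ℂ) η + M ξ η * (φ : ∀ _ : ι, ℂ) η) := by
              rw [this]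
          _ = (∑' η, M ξ η * (ψ : ∀ _ : ι, ℂ) η) + ∑' η, M ξ η * (φ : ∀ _ : ι, ℂ) η :=
              Summable.tsum_add h1 h2
      map_smul' := by
        intro c ψ
        apply lp.ext
        funext ξ
        simp only [RingHom.id_apply]
        have : (fun η => M ξ η * ((c • ψ) : ∀ _ : ι, ℂ) η)
            = fun η => c * (M ξ η * (ψ : ∀ _ : ι, ℂ) η) := by
          funext η
          simp only [lp.coeFn_smul, Pi.smul_apply, smul_eq_mul]
          ring
        calc (∑' η, M ξ η * ((c • ψ) : ∀ _ : ι, ℂ) η)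
            = ∑' η, c * (M ξ η * (ψ : ∀ _ : ι, ℂ) η) := by rw [this]
          _ = c * ∑' η, M ξ η * (ψ : ∀ _ : ι, ℂ) η := tsum_mul_left }
    C.toReal
    (by
      intro ψ
      simp only [LinearMap.coe_mk, AddHom.coe_mk]
      have hCnn : (0:ℝ) ≤ C.toReal := ENNReal.toReal_nonneg
      refine lp.norm_le_of_tsum_le (by norm_num) (mul_nonneg hCnn (norm_nonneg _)) ?_
      have key := main_bound hC hr hc ψ
      have hRfin : C^2 * ∑' η, (‖(ψ : ∀ _ : ι, ℂ) η‖₊:ℝ≥0∞)^2 ≠ ⊤ :=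
        ENNReal.mul_ne_top (ENNReal.pow_ne_top hC) (lp_sq_sum_ne_top ψ)
      have h1 : (∑' ξ, (‖∑' η, M ξ η * (ψ : ∀ _ : ι, ℂ) η‖₊ : ℝ≥0∞)^2).toReal
          ≤ (C^2 * ∑' η, (‖(ψ : ∀ _ : ι, ℂ) η‖₊:ℝ≥0∞)^2).toReal :=
        ENNReal.toReal_mono hRfin key
      rw [bridge_toReal] at h1
      rw [ENNReal.toReal_mul, ENNReal.toReal_pow, lp_sq_sum_eq] at h1
      have h2 : ((2:ℝ≥0∞)).toReal = 2 := two_toReal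
      calc ∑' ξ, ‖(fun ξ => ∑' η, M ξ η * (ψ : ∀ _ : ι, ℂ) η) ξ‖ ^ ((2:ℝ≥0∞)).toReal
          = ∑' ξ, ‖∑' η, M ξ η * (ψ : ∀ _ : ι, ℂ) η‖ ^ 2 := by
            refine tsum_congr fun ξ => ?_
            rw [h2, Real.rpow_two]
        _ ≤ C.toReal ^ 2 * ‖ψ‖ ^ 2 := h1
        _ = (C.toReal * ‖ψ‖) ^ ((2:ℝ≥0∞)).toReal := by
            rw [h2, Real.rpow_two]
            ring)

lemma matOp_apply (hC : C ≠ ⊤)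
    (hr : ∀ ξ, ∑' η, (‖M ξ η‖₊:ℝ≥0∞) ≤ C) (hc : ∀ η, ∑' ξ, (‖M ξ η‖₊:ℝ≥0∞) ≤ C)
    (ψ : l2 ι) (ξ : ι) :
    ((matOp M C hC hr hc ψ : l2 ι) : ∀ _ : ι, ℂ) ξ = ∑' η, M ξ η * (ψ : ∀ _ : ι, ℂ) η :=
  rfl

end Op

end SchurAux

namespace EtaleGroupoid

variable {G : Type*} [TopologicalSpace G] (E : EtaleGroupoid G)

lemma mul_x_self {g x : G} (h : E.src g = x) : E.mul g x = g := by
  rw [← h]; exact E.mul_src_self g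

lemma x_mul_self {g x : G} (h : E.rng g = x) : E.mul x g = g := by
  rw [← h]; exact E.rng_mul_self g

lemma mul_inv_cancel_right' {a g : G} (h : E.src a = E.rng g) :
    E.mul (E.mul a g) (E.inv g) = a := by
  rw [E.mul_assoc a g (E.inv g) h (E.rng_inv g).symm, E.mul_inv_self, ← h,
    E.mul_src_self]

lemma inv_mul_cancel_left' {g a : G} (h : E.src g = E.rng a) :
    E.mul (E.inv g) (E.mul g a) = a := by
  rw [← E.mul_assoc (E.inv g) g a (E.src_inv g) h, E.inv_mul_self, h,
    E.rng_mul_self]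

lemma inv_inv' (g : G) : E.inv (E.inv g) = g := by
  have h1 : E.mul (E.mul g (E.inv g)) (E.inv (E.inv g)) = E.inv (E.inv g) := by
    rw [E.mul_inv_self]
    exact E.x_mul_self (by rw [E.rng_inv, E.src_inv])
  rw [E.mul_assoc g (E.inv g) (E.inv (E.inv g)) (E.rng_inv g).symm
    (by rw [E.src_inv, E.rng_inv, E.src_inv]), E.mul_inv_self, E.rng_inv, E.mul_src_self] at h1
  exact h1.symm

lemma inv_injective' : Function.Injective E.inv := by
  intro a b h
  rw [← E.inv_inv' a, h, E.inv_inv']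

lemma mul_cancel_left' {g a b : G} (ha : E.src g = E.rng a) (hb : E.src g = E.rng b)
    (h : E.mul g a = E.mul g b) : a = b := by
  rw [← E.inv_mul_cancel_left' ha, h, E.inv_mul_cancel_left' hb]

lemma mul_cancel_right' {g a b : G} (ha : E.src a = E.rng g) (hb : E.src b = E.rng g)
    (h : E.mul a g = E.mul b g) : a = b := by
  rw [← E.mul_inv_cancel_right' ha, h, E.mul_inv_cancel_right' hb]

lemma inv_unique' {a b : G} (h1 : E.src a = E.rng b) (h2 : E.mul a b = E.rng a) :
    b = E.inv a := by
  have h3 : E.mul (E.inv a) (E.mul a b) = E.mul (E.inv a) (E.rng a) := by rw [h2]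
  rw [E.inv_mul_cancel_left' h1, ← E.src_inv a, E.mul_x_self rfl] at h3
  exact h3

lemma inv_mul' {p q : G} (h : E.src p = E.rng q) :
    E.inv (E.mul p q) = E.mul (E.inv q) (E.inv p) := by
  refine (E.inv_unique' ?_ ?_).symm
  · rw [E.src_mul p q h, E.rng_mul (E.inv q) (E.inv p) (by rw [E.src_inv, E.rng_inv, h]),
      E.rng_inv]
  · rw [← E.mul_assoc (E.mul p q) (E.inv q) (E.inv p)
      (by rw [E.src_mul p q h, E.rng_inv]) (by rw [E.src_inv, E.rng_inv, h]),
      E.mul_inv_cancel_right' h, E.mul_inv_self, E.rng_mul p q h]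
/-- Bundled subgroup hypotheses. -/
structure Subgrp (E : EtaleGroupoid G) (x : G) (H : Set G) : Prop where
  mem : x ∈ H
  sub : ∀ h ∈ H, E.src h = x ∧ E.rng h = x
  mulmem : ∀ h ∈ H, ∀ h' ∈ H, E.mul h h' ∈ H
  invmem : ∀ h ∈ H, E.inv h ∈ H

variable {E} {x : G} {H : Set G}

/-- The arrow `u h v⁻¹`. -/
def arr (u : E.srcFiber x) (h : ↥H) (v : E.srcFiber x) : G :=
  E.mul (E.mul u.1 h.1) (E.inv v.1)

namespace Subgrp

variable (hs : Subgrp E x H)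
include hs

lemma hsrc (h : ↥H) : E.src h.1 = x := (hs.sub _ h.2).1
lemma hrng (h : ↥H) : E.rng h.1 = x := (hs.sub _ h.2).2

omit hs in lemma usrc (u : E.srcFiber x) : E.src u.1 = x := u.2

/-- The group structure on `H`. -/
noncomputable def grp : Group ↥H where
  mul h h' := ⟨E.mul h.1 h'.1, hs.mulmem _ h.2 _ h'.2⟩
  one := ⟨x, hs.mem⟩
  inv h := ⟨E.inv h.1, hs.invmem _ h.2⟩
  mul_assoc a b c := Subtype.ext
    (E.mul_assoc a.1 b.1 c.1 ((hs.hsrc a).trans (hs.hrng b).symm)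
      ((hs.hsrc b).trans (hs.hrng c).symm))
  one_mul a := Subtype.ext (E.x_mul_self (hs.hrng a))
  mul_one a := Subtype.ext (E.mul_x_self (hs.hsrc a))
  inv_mul_cancel a := Subtype.ext (by
    show E.mul (E.inv a.1) a.1 = x
    rw [E.inv_mul_self, hs.hsrc])

lemma coe_hmul (a b : ↥H) : ((hs.grp.mul a b : ↥H) : G) = E.mul a.1 b.1 := rfl
lemma coe_hinv (a : ↥H) : ((hs.grp.inv a : ↥H) : G) = E.inv a.1 := rfl

lemma src_umul (u : E.srcFiber x) (h : ↥H) : E.src (E.mul u.1 h.1) = x := by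
  rw [E.src_mul _ _ (u.2.trans (hs.hrng h).symm), hs.hsrc]

lemma rng_umul (u : E.srcFiber x) (h : ↥H) : E.rng (E.mul u.1 h.1) = E.rng u.1 :=
  E.rng_mul _ _ (u.2.trans (hs.hrng h).symm)

/-- `u·h` as an element of the source fibre. -/
def umul (u : E.srcFiber x) (h : ↥H) : E.srcFiber x := ⟨E.mul u.1 h.1, hs.src_umul u h⟩

lemma arr_src (u v : E.srcFiber x) (h : ↥H) : E.src (arr u h v) = E.rng v.1 := by
  unfold arr
  rw [E.src_mul _ _ (by rw [hs.src_umul, E.rng_inv, v.2]), E.src_inv]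

lemma arr_rng (u v : E.srcFiber x) (h : ↥H) : E.rng (arr u h v) = E.rng u.1 := by
  unfold arr
  rw [E.rng_mul _ _ (by rw [hs.src_umul, E.rng_inv, v.2]), hs.rng_umul]

lemma arr_mul_v (u v : E.srcFiber x) (h : ↥H) :
    E.mul (arr u h v) v.1 = E.mul u.1 h.1 := by
  unfold arr
  rw [E.mul_assoc _ _ _ (by rw [hs.src_umul, E.rng_inv, v.2]) (E.src_inv v.1),
    E.inv_mul_self, v.2, E.mul_x_self (hs.src_umul u h)]

lemma arr_inj_h (u v : E.srcFiber x) {h h' : ↥H} (hE : arr u h v = arr u h' v) :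
    h = h' := by
  have h1 : E.mul (arr u h v) v.1 = E.mul (arr u h' v) v.1 := by rw [hE]
  rw [hs.arr_mul_v, hs.arr_mul_v] at h1
  have h2 : h.1 = h'.1 :=
    E.mul_cancel_left' (u.2.trans (hs.hrng h).symm) (u.2.trans (hs.hrng h').symm) h1
  exact Subtype.ext h2

lemma inv_arr (u v : E.srcFiber x) (h : ↥H) :
    E.inv (arr u h v) = arr v (hs.grp.inv h) u := by
  unfold arr
  rw [E.inv_mul' (by rw [hs.src_umul, E.rng_inv, v.2]), E.inv_inv',
    E.inv_mul' (u.2.trans (hs.hrng h).symm), hs.coe_hinv,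
    ← E.mul_assoc v.1 (E.inv h.1) (E.inv u.1)
      (by rw [v.2, E.rng_inv, hs.hsrc]) (by rw [E.src_inv, E.rng_inv, hs.hrng, u.2])]

lemma rel_refl (u : E.srcFiber x) : E.cosetRel x H u u :=
  ⟨x, hs.mem, E.mul_x_self u.2⟩

lemma rel_symm {u v : E.srcFiber x} (h : E.cosetRel x H u v) : E.cosetRel x H v u := by
  obtain ⟨k, hk, he⟩ := h
  refine ⟨E.inv k, hs.invmem _ hk, ?_⟩
  rw [← he, E.mul_inv_cancel_right' (u.2.trans ((hs.sub _ hk).2).symm)]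

lemma rel_trans {u v w : E.srcFiber x} (h : E.cosetRel x H u v)
    (h' : E.cosetRel x H v w) : E.cosetRel x H u w := by
  obtain ⟨k, hk, he⟩ := h
  obtain ⟨k', hk', he'⟩ := h'
  refine ⟨E.mul k k', hs.mulmem _ hk _ hk', ?_⟩
  rw [← E.mul_assoc u.1 k k' (u.2.trans ((hs.sub _ hk).2).symm)
    (((hs.sub _ hk).1).trans ((hs.sub _ hk').2).symm), he, he']

lemma rel_equivalence : Equivalence (E.cosetRel x H) :=
  ⟨hs.rel_refl, hs.rel_symm, hs.rel_trans⟩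

lemma mk_eq_mk {u v : E.srcFiber x} :
    Quot.mk (E.cosetRel x H) u = Quot.mk (E.cosetRel x H) v ↔ E.cosetRel x H u v := by
  rw [Quot.eq]
  exact Equivalence.eqvGen_iff hs.rel_equivalence

lemma rel_out {u : E.srcFiber x} {ξ : E.CosetSpace x H}
    (h : Quot.mk (E.cosetRel x H) u = ξ) : E.cosetRel x H u (Quot.out ξ) :=
  hs.mk_eq_mk.mp (by rw [h]; exact (Quot.out_eq (ξ : Quot (E.cosetRel x H))).symm)

/-- If `u·h = v` (with `h ∈ H`) then `u, v` give the same coset. -/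
lemma mk_umul (u : E.srcFiber x) (h : ↥H) :
    Quot.mk (E.cosetRel x H) (hs.umul u h) = Quot.mk (E.cosetRel x H) u :=
  hs.mk_eq_mk.mpr (hs.rel_symm ⟨h.1, h.2, rfl⟩)

lemma row_inj (u : E.srcFiber x) :
    Function.Injective
      (fun p : E.CosetSpace x H × ↥H => arr u p.2 (Quot.out p.1)) := by
  rintro ⟨η, h⟩ ⟨η', h'⟩ hE
  simp only at hE
  set v := Quot.out η with hv
  set v' := Quot.out η' with hv'
  have h1 : arr v (hs.grp.inv h) u = arr v' (hs.grp.inv h') u := by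
    rw [← hs.inv_arr, ← hs.inv_arr, hE]
  have h2 : E.mul v.1 (E.inv h.1) = E.mul v'.1 (E.inv h'.1) := by
    have := congrArg (fun z => E.mul z u.1) h1
    simpa only [hs.arr_mul_v, hs.coe_hinv] using this
  have hrel : E.cosetRel x H v v' := by
    refine hs.rel_trans (u := v) (v := hs.umul v (hs.grp.inv h)) ⟨E.inv h.1, (hs.grp.inv h).2, rfl⟩ ?_
    refine hs.rel_symm ?_
    refine ⟨E.inv h'.1, (hs.grp.inv h').2, ?_⟩
    show E.mul v'.1 (E.inv h'.1) = (hs.umul v (hs.grp.inv h)).1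
    rw [← h2]; rfl
  have hηη' : η = η' := by
    rw [← Quot.out_eq η, ← Quot.out_eq η', ← hv, ← hv', hs.mk_eq_mk.mpr hrel]
  subst hηη'
  have hvv' : v = v' := by rw [hv, hv']
  rw [← hvv'] at h2
  have h3 : E.inv h.1 = E.inv h'.1 :=
    E.mul_cancel_left' (v.2.trans (by rw [E.rng_inv, hs.hsrc]))
      (v.2.trans (by rw [E.rng_inv, hs.hsrc])) h2
  have : h = h' := Subtype.ext (E.inv_injective' h3)
  rw [this]

lemma col_inj (v : E.srcFiber x) :
    Function.Injective
      (fun p : E.CosetSpace x H × ↥H => arr (Quot.out p.1) p.2 v) := by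
  rintro ⟨ξ, h⟩ ⟨ξ', h'⟩ hE
  simp only at hE
  set u := Quot.out ξ with hu
  set u' := Quot.out ξ' with hu'
  have h2 : E.mul u.1 h.1 = E.mul u'.1 h'.1 := by
    have := congrArg (fun z => E.mul z v.1) hE
    simpa only [hs.arr_mul_v] using this
  have hrel : E.cosetRel x H u u' := by
    refine hs.rel_trans (v := hs.umul u h) ⟨h.1, h.2, rfl⟩ (hs.rel_symm ?_)
    exact ⟨h'.1, h'.2, h2.symm⟩
  have hξξ' : ξ = ξ' := by
    rw [← Quot.out_eq ξ, ← Quot.out_eq ξ', ← hu, ← hu', hs.mk_eq_mk.mpr hrel]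
  subst hξξ'
  have huu' : u = u' := by rw [hu, hu']
  rw [← huu'] at h2
  have h3 : h = h' := Subtype.ext
    (E.mul_cancel_left' (u.2.trans (hs.hrng h).symm) (u.2.trans (hs.hrng h').symm) h2)
  rw [h3]

lemma arr_umul (u v : E.srcFiber x) (h₂ h₁ h : ↥H) :
    arr (hs.umul u h₂) h (hs.umul v h₁)
      = arr u (hs.grp.mul (hs.grp.mul h₂ h) (hs.grp.inv h₁)) v := by
  show E.mul (E.mul (E.mul u.1 h₂.1) h.1) (E.inv (E.mul v.1 h₁.1))
      = E.mul (E.mul u.1 (E.mul (E.mul h₂.1 h.1) (E.inv h₁.1))) (E.inv v.1)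
  rw [E.mul_assoc u.1 h₂.1 h.1 (u.2.trans (hs.hrng h₂).symm)
      ((hs.hsrc h₂).trans (hs.hrng h).symm),
    E.inv_mul' (v.2.trans (hs.hrng h₁).symm),
    ← E.mul_assoc (E.mul u.1 (E.mul h₂.1 h.1)) (E.inv h₁.1) (E.inv v.1)
      (by
        rw [E.src_mul u.1 _ (u.2.trans (by rw [E.rng_mul h₂.1 h.1 ((hs.hsrc h₂).trans (hs.hrng h).symm), hs.hrng])),
          E.src_mul h₂.1 h.1 ((hs.hsrc h₂).trans (hs.hrng h).symm), hs.hsrc, E.rng_inv, hs.hsrc])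
      (by rw [E.src_inv, E.rng_inv, hs.hrng, v.2]),
    E.mul_assoc u.1 (E.mul h₂.1 h.1) (E.inv h₁.1)
      (u.2.trans (by rw [E.rng_mul h₂.1 h.1 ((hs.hsrc h₂).trans (hs.hrng h).symm), hs.hrng]))
      (by rw [E.src_mul h₂.1 h.1 ((hs.hsrc h₂).trans (hs.hrng h).symm), hs.hsrc, E.rng_inv, hs.hsrc])]

lemma arr_mul_arr (u w v : E.srcFiber x) (h' h'' : ↥H) :
    E.mul (arr u h' w) (arr w h'' v) = arr u (hs.grp.mul h' h'') v := by
  have hA : E.src (E.mul u.1 h'.1) = x := hs.src_umul u h'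
  have hB : E.rng (arr w h'' v) = E.rng w.1 := hs.arr_rng w v h''
  show E.mul (E.mul (E.mul u.1 h'.1) (E.inv w.1)) (arr w h'' v)
      = E.mul (E.mul u.1 (E.mul h'.1 h''.1)) (E.inv v.1)
  rw [E.mul_assoc (E.mul u.1 h'.1) (E.inv w.1) (arr w h'' v)
      (by rw [hA, E.rng_inv, w.2]) (by rw [E.src_inv, hB])]
  show E.mul (E.mul u.1 h'.1) (E.mul (E.inv w.1) (E.mul (E.mul w.1 h''.1) (E.inv v.1)))
      = E.mul (E.mul u.1 (E.mul h'.1 h''.1)) (E.inv v.1)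
  rw [← E.mul_assoc (E.inv w.1) (E.mul w.1 h''.1) (E.inv v.1)
      (by rw [E.src_inv, hs.rng_umul]) (by rw [hs.src_umul, E.rng_inv, v.2]),
    E.inv_mul_cancel_left' (w.2.trans (hs.hrng h'').symm),
    ← E.mul_assoc (E.mul u.1 h'.1) h''.1 (E.inv v.1)
      (by rw [hs.src_umul, hs.hrng]) (by rw [hs.hsrc, E.rng_inv, v.2]),
    E.mul_assoc u.1 h'.1 h''.1 (u.2.trans (hs.hrng h').symm)
      ((hs.hsrc h').trans (hs.hrng h'').symm)]

end Subgrp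

lemma csummable {β : Type*} {f : β → ℂ} (h : ∑' b, (‖f b‖₊ : ℝ≥0∞) ≠ ⊤) :
    Summable f :=
  Summable.of_nnnorm (ENNReal.tsum_coe_ne_top_iff_summable.mp h)

variable (E) in
/-- Sum of `‖a·‖` over the source fibre of `u`. -/
noncomputable def fibS (a : G → ℂ) (u : G) : ℝ≥0∞ :=
  ∑' k : {k : G // E.src k = u}, (‖a k.1‖₊ : ℝ≥0∞)

variable (E) in
/-- Sum of `‖a·‖` over the range fibre of `u`. -/
noncomputable def fibR (a : G → ℂ) (u : G) : ℝ≥0∞ :=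
  ∑' k : {k : G // E.rng k = u}, (‖a k.1‖₊ : ℝ≥0∞)

variable (E) in
/-- Uniform summability over fibres ("Schur property"). -/
def Sch (a : G → ℂ) : Prop :=
  ∃ C : ℝ≥0∞, C ≠ ⊤ ∧ ∀ u : G, fibS E a u ≤ C ∧ fibR E a u ≤ C

/-- The kernel of the quasi-regular representation. -/
noncomputable def ker (a : G → ℂ) (ξ η : E.CosetSpace x H) : ℂ :=
  ∑' h : ↥H, a (arr (Quot.out ξ) h (Quot.out η))

namespace Subgrp

variable (hs : Subgrp E x H)
include hs

lemma tsum_arr_le_fibS (a : G → ℂ) (u v : E.srcFiber x) :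
    ∑' h : ↥H, (‖a (arr u h v)‖₊ : ℝ≥0∞) ≤ fibS E a (E.rng v.1) := by
  refine Summable.tsum_le_tsum_of_inj
    (fun h : ↥H => (⟨arr u h v, hs.arr_src u v h⟩ : {k : G // E.src k = E.rng v.1}))
    (fun h h' hE => hs.arr_inj_h u v (congrArg Subtype.val hE))
    (fun _ _ => zero_le) (fun h => le_rfl) ENNReal.summable ENNReal.summable

lemma summable_arr {a : G → ℂ} (ha : Sch E a) (u v : E.srcFiber x) :
    Summable fun h : ↥H => a (arr u h v) := by
  obtain ⟨C, hC, hb⟩ := ha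
  refine csummable (ne_top_of_le_ne_top hC ?_)
  exact (hs.tsum_arr_le_fibS a u v).trans (hb _).1

lemma tsum_arr_le_C {a : G → ℂ} {C : ℝ≥0∞}
    (hb : ∀ u : G, fibS E a u ≤ C ∧ fibR E a u ≤ C) (u v : E.srcFiber x) :
    ∑' h : ↥H, (‖a (arr u h v)‖₊ : ℝ≥0∞) ≤ C :=
  (hs.tsum_arr_le_fibS a u v).trans (hb _).1

lemma ker_row_bound {a : G → ℂ} {C : ℝ≥0∞} (hC : C ≠ ⊤)
    (hb : ∀ u : G, fibS E a u ≤ C ∧ fibR E a u ≤ C) (ξ : E.CosetSpace x H) :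
    ∑' η : E.CosetSpace x H, (‖ker a ξ η‖₊ : ℝ≥0∞) ≤ C := by
  set u := Quot.out ξ
  calc ∑' η : E.CosetSpace x H, (‖ker a ξ η‖₊ : ℝ≥0∞)
      ≤ ∑' η : E.CosetSpace x H, ∑' h : ↥H, (‖a (arr u h (Quot.out η))‖₊ : ℝ≥0∞) := by
        refine ENNReal.tsum_le_tsum fun η => ?_
        exact SchurAux.nnnorm_tsum_le_ennreal
          (ne_top_of_le_ne_top hC (hs.tsum_arr_le_C hb u (Quot.out η)))
    _ = ∑' p : E.CosetSpace x H × ↥H, (‖a (arr u p.2 (Quot.out p.1))‖₊ : ℝ≥0∞) :=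
        (ENNReal.tsum_prod (f := fun η h => (‖a (arr u h (Quot.out η))‖₊ : ℝ≥0∞))).symm
    _ ≤ fibR E a (E.rng u.1) := by
        refine Summable.tsum_le_tsum_of_inj
          (fun p : E.CosetSpace x H × ↥H =>
            (⟨arr u p.2 (Quot.out p.1), hs.arr_rng u (Quot.out p.1) p.2⟩ :
              {k : G // E.rng k = E.rng u.1}))
          (fun p p' hE => hs.row_inj u (congrArg Subtype.val hE))
          (fun _ _ => zero_le) (fun p => le_rfl) ENNReal.summable ENNReal.summable
    _ ≤ C := (hb _).2

lemma ker_col_bound {a : G → ℂ} {C : ℝ≥0∞} (hC : C ≠ ⊤)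
    (hb : ∀ u : G, fibS E a u ≤ C ∧ fibR E a u ≤ C) (η : E.CosetSpace x H) :
    ∑' ξ : E.CosetSpace x H, (‖ker a ξ η‖₊ : ℝ≥0∞) ≤ C := by
  set v := Quot.out η
  calc ∑' ξ : E.CosetSpace x H, (‖ker a ξ η‖₊ : ℝ≥0∞)
      ≤ ∑' ξ : E.CosetSpace x H, ∑' h : ↥H, (‖a (arr (Quot.out ξ) h v)‖₊ : ℝ≥0∞) := by
        refine ENNReal.tsum_le_tsum fun ξ => ?_
        exact SchurAux.nnnorm_tsum_le_ennreal
          (ne_top_of_le_ne_top hC (hs.tsum_arr_le_C hb (Quot.out ξ) v))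
    _ = ∑' p : E.CosetSpace x H × ↥H, (‖a (arr (Quot.out p.1) p.2 v)‖₊ : ℝ≥0∞) :=
        (ENNReal.tsum_prod (f := fun ξ h => (‖a (arr (Quot.out ξ) h v)‖₊ : ℝ≥0∞))).symm
    _ ≤ fibS E a (E.rng v.1) := by
        refine Summable.tsum_le_tsum_of_inj
          (fun p : E.CosetSpace x H × ↥H =>
            (⟨arr (Quot.out p.1) p.2 v, hs.arr_src (Quot.out p.1) v p.2⟩ :
              {k : G // E.src k = E.rng v.1}))
          (fun p p' hE => hs.col_inj v (congrArg Subtype.val hE))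
          (fun _ _ => zero_le) (fun p => le_rfl) ENNReal.summable ENNReal.summable
    _ ≤ C := (hb _).1

lemma ker_rep {a : G → ℂ} {u v : E.srcFiber x} {ξ η : E.CosetSpace x H}
    (hu : Quot.mk (E.cosetRel x H) u = ξ) (hv : Quot.mk (E.cosetRel x H) v = η) :
    ker a ξ η = ∑' h : ↥H, a (arr u h v) := by
  letI := hs.grp
  obtain ⟨k₂, hk₂, he₂⟩ := hs.rel_out hu
  obtain ⟨k₁, hk₁, he₁⟩ := hs.rel_out hv
  have hξ : Quot.out ξ = hs.umul u ⟨k₂, hk₂⟩ := Subtype.ext he₂.symm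
  have hη : Quot.out η = hs.umul v ⟨k₁, hk₁⟩ := Subtype.ext he₁.symm
  show (∑' h : ↥H, a (arr (Quot.out ξ) h (Quot.out η))) = _
  rw [hξ, hη]
  calc (∑' h : ↥H, a (arr (hs.umul u ⟨k₂, hk₂⟩) h (hs.umul v ⟨k₁, hk₁⟩)))
      = ∑' h : ↥H, a (arr u ((⟨k₂, hk₂⟩ : ↥H) * h * (⟨k₁, hk₁⟩ : ↥H)⁻¹) v) :=
        tsum_congr fun h => by rw [hs.arr_umul]; rfl
    _ = ∑' h : ↥H, a (arr u h v) := by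
        have := ((Equiv.mulLeft (⟨k₂, hk₂⟩ : ↥H)).trans
          (Equiv.mulRight ((⟨k₁, hk₁⟩ : ↥H)⁻¹))).tsum_eq (fun h => a (arr u h v))
        simpa using this

lemma ker_star (a : G → ℂ) (ξ η : E.CosetSpace x H) :
    ker (E.starFun a) ξ η = starRingEnd ℂ (ker a η ξ) := by
  letI := hs.grp
  calc (∑' h : ↥H, E.starFun a (arr (Quot.out ξ) h (Quot.out η)))
      = ∑' h : ↥H, star (a (arr (Quot.out η) h⁻¹ (Quot.out ξ))) := by
        refine tsum_congr fun h => ?_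
        show star (a (E.inv (arr (Quot.out ξ) h (Quot.out η)))) = _
        rw [hs.inv_arr]
    _ = ∑' h : ↥H, star (a (arr (Quot.out η) h (Quot.out ξ))) :=
        (Equiv.inv ↥H).tsum_eq fun h => star (a (arr (Quot.out η) h (Quot.out ξ)))
    _ = starRingEnd ℂ (∑' h : ↥H, a (arr (Quot.out η) h (Quot.out ξ))) := by
        rw [starRingEnd_apply, tsum_star]

end Subgrp

lemma normsummable {β : Type*} {f : β → ℂ} (h : ∑' b, (‖f b‖₊ : ℝ≥0∞) ≠ ⊤) :
    Summable fun b => ‖f b‖ := by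
  have h1 := ENNReal.tsum_coe_ne_top_iff_summable.mp h
  have h2 := NNReal.summable_coe.mpr h1
  simpa using h2

namespace Subgrp

variable (hs : Subgrp E x H)
include hs

lemma row_pair_bound {a : G → ℂ} {C : ℝ≥0∞}
    (hb : ∀ u : G, fibS E a u ≤ C ∧ fibR E a u ≤ C) (u : E.srcFiber x) :
    ∑' p : E.CosetSpace x H × ↥H, (‖a (arr u p.2 (Quot.out p.1))‖₊ : ℝ≥0∞) ≤ C := by
  refine le_trans ?_ (hb (E.rng u.1)).2
  refine Summable.tsum_le_tsum_of_inj
    (fun p : E.CosetSpace x H × ↥H =>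
      (⟨arr u p.2 (Quot.out p.1), hs.arr_rng u (Quot.out p.1) p.2⟩ :
        {k : G // E.rng k = E.rng u.1}))
    (fun p p' hE => hs.row_inj u (congrArg Subtype.val hE))
    (fun _ _ => zero_le) (fun p => le_rfl) ENNReal.summable ENNReal.summable

lemma ker_conv {a b : G → ℂ} (ha : Sch E a) (hb : Sch E b) (ξ η : E.CosetSpace x H) :
    ker (E.convolution a b) ξ η
      = ∑' η' : E.CosetSpace x H, ker a ξ η' * ker b η' η := by
  letI := hs.grp
  obtain ⟨Ca, hCa, hba⟩ := ha
  obtain ⟨Cb, hCb, hbb⟩ := hb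
  set u := Quot.out ξ with hu
  set v := Quot.out η with hv
  let J := (h : ↥H) × {p : G × G // E.src p.1 = E.rng p.2 ∧ E.mul p.1 p.2 = arr u h v}
  let F : J → ℂ := fun j => a j.2.1.1 * b j.2.1.2
  let K := (_η' : E.CosetSpace x H) × (↥H × ↥H)
  let FK : K → ℂ := fun k => a (arr u k.2.1 (Quot.out k.1)) * b (arr (Quot.out k.1) k.2.2 v)
  have cond1 : ∀ (η' : E.CosetSpace x H) (h' h'' : ↥H),
      E.src (arr u h' (Quot.out η')) = E.rng (arr (Quot.out η') h'' v) := by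
    intro η' h' h''
    rw [hs.arr_src, hs.arr_rng]
  let Ψ : K → J := fun k =>
    ⟨k.2.1 * k.2.2, ⟨(arr u k.2.1 (Quot.out k.1), arr (Quot.out k.1) k.2.2 v),
      cond1 k.1 k.2.1 k.2.2, hs.arr_mul_arr u (Quot.out k.1) v k.2.1 k.2.2⟩⟩
  have hinj : Function.Injective Ψ := by
    rintro ⟨η₁, h₁', h₁''⟩ ⟨η₂, h₂', h₂''⟩ hE
    have e1 : arr u h₁' (Quot.out η₁) = arr u h₂' (Quot.out η₂) :=
      congrArg (fun j : J => j.2.1.1) hE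
    have e2 : ((η₁, h₁') : E.CosetSpace x H × ↥H) = (η₂, h₂') := hs.row_inj u e1
    have eη : η₁ = η₂ := congrArg Prod.fst e2
    have eh' : h₁' = h₂' := congrArg Prod.snd e2
    subst eη
    have e3 : arr (Quot.out η₁) h₁'' v = arr (Quot.out η₁) h₂'' v :=
      congrArg (fun j : J => j.2.1.2) hE
    have eh'' : h₁'' = h₂'' := hs.arr_inj_h _ _ e3
    rw [eh', eh'']
  have hsurj : Function.Surjective Ψ := by
    rintro ⟨h, ⟨⟨p, q⟩, hpq, hprod⟩⟩
    have hq : E.src q = E.rng v.1 := by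
      have h1 : E.src (E.mul p q) = E.src q := E.src_mul p q hpq
      rw [hprod, hs.arr_src] at h1
      exact h1.symm
    have hw₀ : E.src (E.mul q v.1) = x := by rw [E.src_mul q v.1 hq, v.2]
    obtain ⟨k₀, hk₀, he₀⟩ := hs.rel_out
      (u := ⟨E.mul q v.1, hw₀⟩) (ξ := Quot.mk (E.cosetRel x H) ⟨E.mul q v.1, hw₀⟩) rfl
    set w := Quot.out (Quot.mk (E.cosetRel x H) (⟨E.mul q v.1, hw₀⟩ : E.srcFiber x))
      with hwdef
    let h₀ : ↥H := ⟨k₀, hk₀⟩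
    have hq' : q = arr w h₀⁻¹ v := by
      show q = E.mul (E.mul w.1 (E.inv k₀)) (E.inv v.1)
      have e1 : E.mul w.1 (E.inv k₀) = E.mul q v.1 := by
        rw [← he₀, E.mul_inv_cancel_right' (hw₀.trans ((hs.sub _ hk₀).2).symm)]
      rw [e1, E.mul_inv_cancel_right' hq]
    have hp' : p = arr u (h * h₀) w := by
      have e1 : p = E.mul (E.mul p q) (E.inv q) := (E.mul_inv_cancel_right' hpq).symm
      rw [hprod] at e1
      have e2 : E.inv q = arr v h₀ w := by
        rw [hq', hs.inv_arr]
        congr 1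
        exact inv_inv h₀
      rw [e2] at e1
      rw [e1, hs.arr_mul_arr]
      rfl
    have hfst : (h * h₀) * h₀⁻¹ = h := by group
    have jext : ∀ (j j' : J), j.1 = j'.1 → (j.2 : G × G) = (j'.2 : G × G) → j = j' := by
      rintro ⟨h1, ⟨pr, hc⟩⟩ ⟨h2, ⟨pr', hc'⟩⟩ e1 e2
      simp only at e1
      subst e1
      simp only at e2
      exact congrArg _ (Subtype.ext e2)
    refine ⟨⟨Quot.mk (E.cosetRel x H) (⟨E.mul q v.1, hw₀⟩ : E.srcFiber x),
      (h * h₀, h₀⁻¹)⟩, ?_⟩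
    refine jext _ _ ?_ ?_
    · show (h * h₀) * h₀⁻¹ = h
      exact hfst
    · show (arr u (h * h₀) w, arr w h₀⁻¹ v) = (p, q)
      rw [← hp', ← hq']
  have hNF : ∑' k : K, ((‖a (arr u k.2.1 (Quot.out k.1))‖₊ : ℝ≥0∞)
      * (‖b (arr (Quot.out k.1) k.2.2 v)‖₊ : ℝ≥0∞)) ≤ Ca * Cb := by
    calc ∑' k : K, ((‖a (arr u k.2.1 (Quot.out k.1))‖₊ : ℝ≥0∞)
          * (‖b (arr (Quot.out k.1) k.2.2 v)‖₊ : ℝ≥0∞))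
        = ∑' η' : E.CosetSpace x H, ∑' hp : ↥H × ↥H,
            ((‖a (arr u hp.1 (Quot.out η'))‖₊ : ℝ≥0∞)
              * (‖b (arr (Quot.out η') hp.2 v)‖₊ : ℝ≥0∞)) :=
          ENNReal.tsum_sigma (f := fun (η' : E.CosetSpace x H) (hp : ↥H × ↥H) =>
            (‖a (arr u hp.1 (Quot.out η'))‖₊ : ℝ≥0∞)
              * (‖b (arr (Quot.out η') hp.2 v)‖₊ : ℝ≥0∞))
      _ = ∑' η' : E.CosetSpace x H,
            (∑' h' : ↥H, (‖a (arr u h' (Quot.out η'))‖₊ : ℝ≥0∞))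
              * ∑' h'' : ↥H, (‖b (arr (Quot.out η') h'' v)‖₊ : ℝ≥0∞) := by
          refine tsum_congr fun η' => ?_
          rw [ENNReal.tsum_prod (f := fun h' h'' => (‖a (arr u h' (Quot.out η'))‖₊ : ℝ≥0∞)
            * (‖b (arr (Quot.out η') h'' v)‖₊ : ℝ≥0∞))]
          rw [← ENNReal.tsum_mul_right]
          exact tsum_congr fun h' => ENNReal.tsum_mul_left
      _ ≤ ∑' η' : E.CosetSpace x H,
            (∑' h' : ↥H, (‖a (arr u h' (Quot.out η'))‖₊ : ℝ≥0∞)) * Cb := by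
          refine ENNReal.tsum_le_tsum fun η' => ?_
          exact mul_le_mul_right (hs.tsum_arr_le_C hbb (Quot.out η') v) _
      _ = (∑' p : E.CosetSpace x H × ↥H,
            (‖a (arr u p.2 (Quot.out p.1))‖₊ : ℝ≥0∞)) * Cb := by
          rw [ENNReal.tsum_prod (f := fun (η' : E.CosetSpace x H) (h' : ↥H) =>
            (‖a (arr u h' (Quot.out η'))‖₊ : ℝ≥0∞)), ← ENNReal.tsum_mul_right]
      _ ≤ Ca * Cb := mul_le_mul_left (hs.row_pair_bound hba u) _
  have hFKnorm : ∑' k : K, (‖FK k‖₊ : ℝ≥0∞) ≠ ⊤ := by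
    refine ne_top_of_le_ne_top (ENNReal.mul_ne_top hCa hCb) (le_trans (le_of_eq ?_) hNF)
    refine tsum_congr fun k => ?_
    simp [FK, nnnorm_mul, ENNReal.coe_mul]
  have hFKsum : Summable FK := csummable hFKnorm
  let eqv : K ≃ J := Equiv.ofBijective Ψ ⟨hinj, hsurj⟩
  have hFsum : Summable F := (eqv.summable_iff (f := F)).mp hFKsum
  calc ker (E.convolution a b) ξ η
      = ∑' j : J, F j :=
        (Summable.tsum_sigma' (fun h => hFsum.comp_injective sigma_mk_injective) hFsum).symm
    _ = ∑' k : K, FK k := by rw [← eqv.tsum_eq F]; rfl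
    _ = ∑' η' : E.CosetSpace x H, ∑' hp : ↥H × ↥H, FK ⟨η', hp⟩ :=
        Summable.tsum_sigma' (fun η' => hFKsum.comp_injective sigma_mk_injective) hFKsum
    _ = ∑' η' : E.CosetSpace x H, ker a ξ η' * ker b η' η := by
        refine tsum_congr fun η' => ?_
        have hsa : Summable fun h' : ↥H => ‖a (arr u h' (Quot.out η'))‖ :=
          normsummable (ne_top_of_le_ne_top hCa (hs.tsum_arr_le_C hba u (Quot.out η')))
        have hsb : Summable fun h'' : ↥H => ‖b (arr (Quot.out η') h'' v)‖ :=
          normsummable (ne_top_of_le_ne_top hCb (hs.tsum_arr_le_C hbb (Quot.out η') v))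
        exact (tsum_mul_tsum_of_summable_norm hsa hsb).symm

end Subgrp

/-- Counting bound: if `f` vanishes off a compact `K` covered by finitely many sets
on each of which `σ` is injective, then each `σ`-fibre sum is bounded. -/
lemma fib_bound_aux {f : G → ℂ} {K : Set G} (hvan : ∀ g ∉ K, f g = 0)
    {B : ℝ} (hB : ∀ g ∈ K, ‖f g‖ ≤ B) (t : Finset G) (W : G → Set G)
    (hcov : K ⊆ ⋃ i ∈ t, W i) (σ : G → G) (hinj : ∀ i ∈ t, Set.InjOn σ (W i))
    (u : G) :
    ∑' k : {k : G // σ k = u}, (‖f k.1‖₊ : ℝ≥0∞)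
      ≤ (t.card : ℝ≥0∞) * (B.toNNReal : ℝ≥0∞) := by
  classical
  set S' : Set {k : G // σ k = u} := {k | k.1 ∈ K} with hS'
  have hsupp : Function.support (fun k : {k : G // σ k = u} => (‖f k.1‖₊ : ℝ≥0∞)) ⊆ S' := by
    intro k hk
    by_contra hkK
    exact hk (by simp [hvan k.1 hkK])
  rw [← tsum_subtype_eq_of_support_subset hsupp]
  have hex : ∀ k : S', ∃ i, i ∈ t ∧ k.1.1 ∈ W i := by
    intro k
    have := hcov k.2
    simpa using this
  choose idx hidxt hidxW using hex
  have hφinj : Function.Injective (fun k : S' => (⟨idx k, hidxt k⟩ : {i // i ∈ t})) := by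
    intro k k' he
    have hidx : idx k = idx k' := congrArg Subtype.val he
    have h1 : k.1.1 = k'.1.1 := by
      refine hinj (idx k) (hidxt k) (hidxW k) (hidx ▸ hidxW k') ?_
      rw [k.1.2, k'.1.2]
    exact Subtype.ext (Subtype.ext h1)
  haveI : Finite S' := Finite.of_injective _ hφinj
  haveI : Fintype S' := Fintype.ofFinite _
  calc ∑' k : S', (‖f k.1.1‖₊ : ℝ≥0∞)
      ≤ ∑' _k : S', (B.toNNReal : ℝ≥0∞) := by
        refine Summable.tsum_le_tsum (fun k => ?_) ENNReal.summable ENNReal.summable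
        rcases Set.mem_setOf_eq ▸ k.2 with hkK
        have h1 : ‖f k.1.1‖ ≤ B := hB _ k.2
        have h2 : ‖f k.1.1‖₊ ≤ B.toNNReal := by
          rw [← norm_toNNReal]
          exact Real.toNNReal_mono h1
        exact_mod_cast ENNReal.coe_le_coe.mpr h2
    _ = (Fintype.card S' : ℝ≥0∞) * (B.toNNReal : ℝ≥0∞) := by
        rw [tsum_fintype]
        simp [Finset.sum_const, nsmul_eq_mul]
    _ ≤ (t.card : ℝ≥0∞) * (B.toNNReal : ℝ≥0∞) := by
        have := Fintype.card_le_of_injective _ hφinj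
        rw [Fintype.card_coe] at this
        exact mul_le_mul_left (by exact_mod_cast Nat.cast_le.mpr this) _

lemma sch_of_gen {f : G → ℂ} (hf : f ∈ CcGen G) : Sch E f := by
  obtain ⟨U, hUopen, hUT2, hfc, K, hKU, hKcpt, hvan⟩ := hf
  obtain ⟨B, hB⟩ := hKcpt.exists_bound_of_continuousOn (hfc.mono hKU)
  have hcov : ∀ g : G, ∃ W : Set G, IsOpen W ∧ g ∈ W ∧
      Set.InjOn E.src W ∧ Set.InjOn E.rng W := by
    intro g
    obtain ⟨U1, hU1, hg1, hinj1, -, -⟩ := E.etale_src g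
    obtain ⟨U2, hU2, hg2, hinj2, -, -⟩ := E.etale_rng g
    exact ⟨U1 ∩ U2, hU1.inter hU2, ⟨hg1, hg2⟩, hinj1.mono Set.inter_subset_left,
      hinj2.mono Set.inter_subset_right⟩
  choose W hWopen hWmem hWs hWr using hcov
  obtain ⟨t, ht⟩ := hKcpt.elim_finite_subcover W hWopen
    (fun k _hk => Set.mem_iUnion.mpr ⟨k, hWmem k⟩)
  refine ⟨(t.card : ℝ≥0∞) * (B.toNNReal : ℝ≥0∞),
    ENNReal.mul_ne_top (ENNReal.natCast_ne_top _) ENNReal.coe_ne_top, fun u => ⟨?_, ?_⟩⟩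
  · exact fib_bound_aux hvan hB t W ht E.src (fun i _ => hWs i) u
  · exact fib_bound_aux hvan hB t W ht E.rng (fun i _ => hWr i) u

lemma sch_add {a b : G → ℂ} (ha : Sch E a) (hb : Sch E b) : Sch E (a + b) := by
  obtain ⟨Ca, hCa, hba⟩ := ha
  obtain ⟨Cb, hCb, hbb⟩ := hb
  refine ⟨Ca + Cb, ENNReal.add_ne_top.mpr ⟨hCa, hCb⟩, fun u => ⟨?_, ?_⟩⟩
  · calc fibS E (a + b) u
        ≤ ∑' k : {k : G // E.src k = u}, ((‖a k.1‖₊ : ℝ≥0∞) + (‖b k.1‖₊ : ℝ≥0∞)) := by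
          refine ENNReal.tsum_le_tsum fun k => ?_
          exact_mod_cast ENNReal.coe_le_coe.mpr (nnnorm_add_le _ _)
      _ = fibS E a u + fibS E b u := ENNReal.tsum_add
      _ ≤ Ca + Cb := add_le_add (hba u).1 (hbb u).1
  · calc fibR E (a + b) u
        ≤ ∑' k : {k : G // E.rng k = u}, ((‖a k.1‖₊ : ℝ≥0∞) + (‖b k.1‖₊ : ℝ≥0∞)) := by
          refine ENNReal.tsum_le_tsum fun k => ?_
          exact_mod_cast ENNReal.coe_le_coe.mpr (nnnorm_add_le _ _)
      _ = fibR E a u + fibR E b u := ENNReal.tsum_add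
      _ ≤ Ca + Cb := add_le_add (hba u).2 (hbb u).2

lemma sch_smul (c : ℂ) {a : G → ℂ} (ha : Sch E a) : Sch E (c • a) := by
  obtain ⟨Ca, hCa, hba⟩ := ha
  refine ⟨(‖c‖₊ : ℝ≥0∞) * Ca, ENNReal.mul_ne_top ENNReal.coe_ne_top hCa, fun u => ⟨?_, ?_⟩⟩
  · calc fibS E (c • a) u
        = ∑' k : {k : G // E.src k = u}, (‖c‖₊ : ℝ≥0∞) * (‖a k.1‖₊ : ℝ≥0∞) := by
          refine tsum_congr fun k => ?_
          simp [fibS, nnnorm_smul, ENNReal.coe_mul]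
      _ = (‖c‖₊ : ℝ≥0∞) * fibS E a u := ENNReal.tsum_mul_left
      _ ≤ (‖c‖₊ : ℝ≥0∞) * Ca := mul_le_mul_right (hba u).1 _
  · calc fibR E (c • a) u
        = ∑' k : {k : G // E.rng k = u}, (‖c‖₊ : ℝ≥0∞) * (‖a k.1‖₊ : ℝ≥0∞) := by
          refine tsum_congr fun k => ?_
          simp [fibR, nnnorm_smul, ENNReal.coe_mul]
      _ = (‖c‖₊ : ℝ≥0∞) * fibR E a u := ENNReal.tsum_mul_left
      _ ≤ (‖c‖₊ : ℝ≥0∞) * Ca := mul_le_mul_right (hba u).2 _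

lemma sch_zero : Sch E (0 : G → ℂ) :=
  ⟨0, by simp, fun u => by simp [fibS, fibR]⟩

variable (E) in
/-- The space of functions with the Schur property, as a submodule. -/
noncomputable def schSub : Submodule ℂ (G → ℂ) where
  carrier := {a | Sch E a}
  add_mem' := sch_add
  zero_mem' := sch_zero
  smul_mem' := sch_smul

lemma sch_of_cc {a : G → ℂ} (ha : a ∈ Cc G) : Sch E a := by
  have hle : Cc G ≤ schSub E := Submodule.span_le.mpr fun _f hf => sch_of_gen hf
  exact hle ha

/-- Two operators on `ℓ²` agreeing on all basis vectors are equal. -/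
lemma ext_single {ι : Type*} [DecidableEq ι]
    {A B : SchurAux.l2 ι →L[ℂ] SchurAux.l2 ι}
    (h : ∀ i, A (lp.single 2 i 1) = B (lp.single 2 i 1)) : A = B := by
  refine ContinuousLinearMap.ext fun ψ => ?_
  have hψ := lp.hasSum_single (E := fun _ : ι => ℂ) (by norm_num) ψ
  have h2 : (fun i => lp.single 2 i ((ψ : ∀ _ : ι, ℂ) i))
      = fun i => (ψ : ∀ _ : ι, ℂ) i • (lp.single 2 i (1 : ℂ) : SchurAux.l2 ι) := by
    funext i
    rw [← lp.single_smul]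
    congr 1
    simp
  rw [h2] at hψ
  have hA : HasSum (fun i => (ψ : ∀ _ : ι, ℂ) i • A (lp.single 2 i 1)) (A ψ) := by
    have := A.hasSum hψ
    simpa only [ContinuousLinearMap.map_smul] using this
  have hB : HasSum (fun i => (ψ : ∀ _ : ι, ℂ) i • B (lp.single 2 i 1)) (B ψ) := by
    have := B.hasSum hψ
    simpa only [ContinuousLinearMap.map_smul] using this
  refine hA.unique ?_
  simpa only [h] using hB

lemma delta_eq (g : G) (hg : E.src g = x) :
    E.delta x H g hg
      = lp.single (E := fun _ : E.CosetSpace x H => ℂ) 2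
        (Quot.mk (E.cosetRel x H) (⟨g, hg⟩ : E.srcFiber x)) (1 : ℂ) := rfl

namespace Subgrp

variable (hs : Subgrp E x H)
include hs

lemma ker_add {a b : G → ℂ} (ha : Sch E a) (hb : Sch E b) (ξ η : E.CosetSpace x H) :
    ker (a + b) ξ η = ker a ξ η + ker b ξ η := by
  show (∑' h : ↥H, (a + b) (arr (Quot.out ξ) h (Quot.out η))) = _
  have : (fun h : ↥H => (a + b) (arr (Quot.out ξ) h (Quot.out η)))
      = fun h : ↥H => a (arr (Quot.out ξ) h (Quot.out η))
        + b (arr (Quot.out ξ) h (Quot.out η)) := by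
    funext h; simp
  rw [this]
  exact Summable.tsum_add (hs.summable_arr ha _ _) (hs.summable_arr hb _ _)

omit hs in
lemma ker_smul (c : ℂ) (a : G → ℂ) (ξ η : E.CosetSpace x H) :
    ker (c • a) ξ η = c * ker a ξ η := by
  show (∑' h : ↥H, (c • a) (arr (Quot.out ξ) h (Quot.out η))) = _
  simp only [Pi.smul_apply, smul_eq_mul]
  exact tsum_mul_left

/-- The quasi-regular representation operator for a single function. -/
noncomputable def Lop (a : G → ℂ) (ha : Sch E a) : E.L2 x H →L[ℂ] E.L2 x H :=
  SchurAux.matOp (ker (x := x) (H := H) a) ha.choose ha.choose_spec.1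
    (fun ξ => hs.ker_row_bound ha.choose_spec.1 ha.choose_spec.2 ξ)
    (fun η => hs.ker_col_bound ha.choose_spec.1 ha.choose_spec.2 η)

lemma Lop_apply (a : G → ℂ) (ha : Sch E a) (ψ : E.L2 x H) (ξ : E.CosetSpace x H) :
    (hs.Lop a ha ψ : ∀ _ : E.CosetSpace x H, ℂ) ξ
      = ∑' η : E.CosetSpace x H, ker a ξ η * (ψ : ∀ _ : E.CosetSpace x H, ℂ) η :=
  rfl

lemma Lop_single (a : G → ℂ) (ha : Sch E a) (η ξ : E.CosetSpace x H) :
    (hs.Lop a ha (lp.single 2 η 1) : ∀ _ : E.CosetSpace x H, ℂ) ξ = ker a ξ η := by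
  rw [hs.Lop_apply]
  rw [tsum_eq_single η]
  · rw [lp.single_apply_self (E := fun _ : E.CosetSpace x H => ℂ), mul_one]
  · intro η' hη'
    rw [lp.single_apply_ne (E := fun _ : E.CosetSpace x H => ℂ) 2 η (1 : ℂ) hη', mul_zero]

end Subgrp
set_option maxHeartbeats 2000000 in
/-- Let `G` be an étale groupoid, `x ∈ G⁰` and `H ≤ G_x^x` a
subgroup.  The formula `L(a) δ_{gH} = ∑_{k ∈ G_{r(g)}} a(k) δ_{kgH}` defines a
*-representation `L` of the convolution algebra `𝒞_c(G)` on `ℓ²(G_x/H)`: `L` is linear,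
its matrix coefficients are `⟨δ_{g₂H}, L(a) δ_{g₁H}⟩ = ∑_{h ∈ H} a(g₂ h g₁⁻¹)`, and
`L(a*) = L(a)*`, `L(ab) = L(a) L(b)` for all `a, b ∈ 𝒞_c(G)`. -/
theorem exists_quasiRegular_representation
    (x : G) (hx : x ∈ E.unitSpace) (H : Set G)
    (hHx : x ∈ H) (hHsub : ∀ h ∈ H, E.src h = x ∧ E.rng h = x)
    (hHmul : ∀ h ∈ H, ∀ h' ∈ H, E.mul h h' ∈ H)
    (hHinv : ∀ h ∈ H, E.inv h ∈ H) :
    ∃ L : Cc G →ₗ[ℂ] (E.L2 x H →L[ℂ] E.L2 x H),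
      (∀ (a : G → ℂ) (ha : a ∈ Cc G) (g₁ g₂ : G)
          (h₁ : E.src g₁ = x) (h₂ : E.src g₂ = x),
        @inner ℂ _ _ (E.delta x H g₂ h₂) (L ⟨a, ha⟩ (E.delta x H g₁ h₁)) =
          ∑' h : H, a (E.mul (E.mul g₂ (h : G)) (E.inv g₁))) ∧
      (∀ (a : G → ℂ) (ha : a ∈ Cc G) (hsa : E.starFun a ∈ Cc G),
        L ⟨E.starFun a, hsa⟩ = ContinuousLinearMap.adjoint (L ⟨a, ha⟩)) ∧
      (∀ (a b : G → ℂ) (ha : a ∈ Cc G) (hb : b ∈ Cc G)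
          (hab : E.convolution a b ∈ Cc G),
        L ⟨E.convolution a b, hab⟩ = (L ⟨a, ha⟩).comp (L ⟨b, hb⟩)) := by
  have hs : E.Subgrp x H := ⟨hHx, hHsub, hHmul, hHinv⟩
  have hsummable : ∀ (a : G → ℂ) (ha : Sch E a) (ψ : E.L2 x H) (ξ : E.CosetSpace x H),
      Summable fun η => ker a ξ η * (ψ : ∀ _ : E.CosetSpace x H, ℂ) η := by
    intro a ha ψ ξ
    exact SchurAux.summable_matVec ha.choose_spec.1
      (fun ξ' => hs.ker_row_bound ha.choose_spec.1 ha.choose_spec.2 ξ') ψ ξ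
  have ecoord : ∀ (f : E.L2 x H) (i : E.CosetSpace x H),
      (f : ∀ _ : E.CosetSpace x H, ℂ) i = @inner ℂ _ _ (lp.single 2 i (1 : ℂ)) f := by
    intro f i
    rw [lp.inner_single_left]
    simp [RCLike.inner_apply]
  have key : ∀ L0 : Cc G →ₗ[ℂ] (E.L2 x H →L[ℂ] E.L2 x H),
      (∀ (c : G → ℂ) (hc : c ∈ Cc G), L0 ⟨c, hc⟩ = hs.Lop c (sch_of_cc hc)) →
      (∀ (a : G → ℂ) (ha : a ∈ Cc G) (g₁ g₂ : G)
          (h₁ : E.src g₁ = x) (h₂ : E.src g₂ = x),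
        @inner ℂ _ _ (E.delta x H g₂ h₂) (L0 ⟨a, ha⟩ (E.delta x H g₁ h₁)) =
          ∑' h : H, a (E.mul (E.mul g₂ (h : G)) (E.inv g₁))) ∧
      (∀ (a : G → ℂ) (ha : a ∈ Cc G) (hsa : E.starFun a ∈ Cc G),
        L0 ⟨E.starFun a, hsa⟩ = ContinuousLinearMap.adjoint (L0 ⟨a, ha⟩)) ∧
      (∀ (a b : G → ℂ) (ha : a ∈ Cc G) (hb : b ∈ Cc G)
          (hab : E.convolution a b ∈ Cc G),
        L0 ⟨E.convolution a b, hab⟩ = (L0 ⟨a, ha⟩).comp (L0 ⟨b, hb⟩)) := by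
    intro L0 hL0
    refine ⟨?_, ?_, ?_⟩
    · intro a ha g₁ g₂ h₁ h₂
      rw [hL0 a ha]
      rw [delta_eq, delta_eq]
      refine (ecoord _ _).symm.trans ?_
      refine (hs.Lop_single _ _ _ _).trans ?_
      refine (hs.ker_rep (u := ⟨g₂, h₂⟩) (v := ⟨g₁, h₁⟩) rfl rfl).trans ?_
      exact tsum_congr fun h => rfl
    · intro a ha hsa
      rw [hL0, hL0]
      refine ext_single fun η => ?_
      apply lp.ext
      funext ξ
      have hL : (hs.Lop (E.starFun a) (sch_of_cc hsa) (lp.single 2 η 1)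
            : ∀ _ : E.CosetSpace x H, ℂ) ξ = ker (E.starFun a) ξ η := hs.Lop_single _ _ _ _
      rw [hL, hs.ker_star]
      rw [ecoord (ContinuousLinearMap.adjoint (hs.Lop a (sch_of_cc ha)) (lp.single 2 η 1)) ξ]
      rw [ContinuousLinearMap.adjoint_inner_right]
      rw [← inner_conj_symm]
      rw [← ecoord, hs.Lop_single]
    · intro a b ha hb hab
      rw [hL0, hL0, hL0]
      refine ext_single fun η => ?_
      apply lp.ext
      funext ξ
      have hL : (hs.Lop (E.convolution a b) (sch_of_cc hab) (lp.single 2 η 1)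
            : ∀ _ : E.CosetSpace x H, ℂ) ξ = ker (E.convolution a b) ξ η :=
        hs.Lop_single _ _ _ _
      rw [show ((hs.Lop a (sch_of_cc ha)).comp (hs.Lop b (sch_of_cc hb))) (lp.single 2 η 1)
          = hs.Lop a (sch_of_cc ha) (hs.Lop b (sch_of_cc hb) (lp.single 2 η 1)) from rfl]
      rw [hL, hs.ker_conv (sch_of_cc ha) (sch_of_cc hb), hs.Lop_apply]
      refine tsum_congr fun η' => ?_
      rw [hs.Lop_single]
  refine ⟨{ toFun := fun a => hs.Lop a.1 (sch_of_cc a.2)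
            map_add' := ?_
            map_smul' := ?_ }, key _ fun c hc => rfl⟩
  · intro a b
    refine ContinuousLinearMap.ext fun ψ => ?_
    apply lp.ext
    funext ξ
    have hRHS : ((hs.Lop a.1 (sch_of_cc a.2) + hs.Lop b.1 (sch_of_cc b.2)) ψ
          : ∀ _ : E.CosetSpace x H, ℂ) ξ
        = (∑' η, ker (a.1 : G → ℂ) ξ η * (ψ : ∀ _ : E.CosetSpace x H, ℂ) η)
          + ∑' η, ker (b.1 : G → ℂ) ξ η * (ψ : ∀ _ : E.CosetSpace x H, ℂ) η := by
      rw [ContinuousLinearMap.add_apply, lp.coeFn_add, Pi.add_apply,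
        hs.Lop_apply, hs.Lop_apply]
    rw [hRHS, hs.Lop_apply]
    have h1 : (fun η => ker ((a + b : ↥(Cc G)) : G → ℂ) ξ η
          * (ψ : ∀ _ : E.CosetSpace x H, ℂ) η)
        = fun η => ker (a.1 : G → ℂ) ξ η * (ψ : ∀ _ : E.CosetSpace x H, ℂ) η
          + ker (b.1 : G → ℂ) ξ η * (ψ : ∀ _ : E.CosetSpace x H, ℂ) η := by
      funext η
      rw [show ((a + b : ↥(Cc G)) : G → ℂ) = (a.1 : G → ℂ) + b.1 from rfl,
        hs.ker_add (sch_of_cc a.2) (sch_of_cc b.2), add_mul]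
    rw [h1]
    exact Summable.tsum_add (hsummable _ (sch_of_cc a.2) ψ ξ) (hsummable _ (sch_of_cc b.2) ψ ξ)
  · intro c a
    refine ContinuousLinearMap.ext fun ψ => ?_
    apply lp.ext
    funext ξ
    have hRHS : (((RingHom.id ℂ) c • hs.Lop a.1 (sch_of_cc a.2)) ψ
          : ∀ _ : E.CosetSpace x H, ℂ) ξ
        = c * ∑' η, ker (a.1 : G → ℂ) ξ η * (ψ : ∀ _ : E.CosetSpace x H, ℂ) η := by
      rw [ContinuousLinearMap.smul_apply, lp.coeFn_smul, Pi.smul_apply,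
        hs.Lop_apply, smul_eq_mul, RingHom.id_apply]
    rw [hRHS, hs.Lop_apply]
    have h1 : (fun η => ker ((c • a : ↥(Cc G)) : G → ℂ) ξ η
          * (ψ : ∀ _ : E.CosetSpace x H, ℂ) η)
        = fun η => c * (ker (a.1 : G → ℂ) ξ η * (ψ : ∀ _ : E.CosetSpace x H, ℂ) η) := by
      funext η
      rw [show ((c • a : ↥(Cc G)) : G → ℂ) = c • (a.1 : G → ℂ) from rfl,
        Subgrp.ker_smul, _root_.mul_assoc]
    rw [h1]
    exact tsum_mul_left

end EtaleGroupoid
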